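/- Let P₀ ⊆ G be a closed U-uniformly discrete set, Ω×_{P₀} the punctured hull of P₀, and T_{P₀} = {P ∈ Ω×_{P₀} : 0 ∈ P} the canonical transversal. Then the set of return times Ξ = {g ∈ G : (T_{P₀} − g) ∩ T_{P₀} ≠ ∅} satisfies Ξ ⊆ closure(P₀ − P₀), and consequently Ξ ∩ U = {0}, i.e. T_{P₀} is a U-separated cross-section. -/

import Mathlib

open scoped Pointwise
open Set Filter Topology

/-- Convergence `P_n → P` in the Chabauty topology, via its sequential characterization. -/
def ChabautyTendsto {G : Type*} [TopologicalSpace G] (Pn : ℕ → Set G) (P : Set G) : Prop :=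
  (∀ φ : ℕ → ℕ, StrictMono φ → ∀ (p : ℕ → G) (x : G),
    (∀ k, p k ∈ Pn (φ k)) → Tendsto p atTop (𝓝 x) → x ∈ P) ∧
  (∀ x ∈ P, ∃ p : ℕ → G, (∀ n, p n ∈ Pn n) ∧ Tendsto p atTop (𝓝 x))

/-- `P` belongs to the hull of `P₀`, i.e. it is a Chabauty limit of translates `P₀ - g_n`. -/
def InHull {G : Type*} [AddCommGroup G] [TopologicalSpace G] (P₀ P : Set G) : Prop :=
  ∃ g : ℕ → G, ChabautyTendsto (fun n => P₀ - ({g n} : Set G)) P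

/-- The canonical transversal `T_{P₀}`: elements of the punctured hull containing `0`. -/
def canonicalT {G : Type*} [AddCommGroup G] [TopologicalSpace G] (P₀ : Set G) : Set (Set G) :=
  {P : Set G | InHull P₀ P ∧ (0 : G) ∈ P}

/-- The set of return times of the canonical transversal `T_{P₀}` is contained in
`closure (P₀ - P₀)`; consequently it meets `U` only in `0`, i.e. `T_{P₀}` is a `U`-separated
cross-section. -/
theorem stmt8 {G : Type*} [AddCommGroup G] [TopologicalSpace G] [IsTopologicalAddGroup G]
    [LocallyCompactSpace G] [SecondCountableTopology G]
    (U : Set G) (hUo : IsOpen U) (hU0 : (0 : G) ∈ U)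
    (P₀ : Set G) (hcl : IsClosed P₀) (hne : P₀.Nonempty) (hud : (P₀ - P₀) ∩ U = {0}) :
    {g : G | ∃ P ∈ canonicalT P₀, P - ({g} : Set G) ∈ canonicalT P₀} ⊆ closure (P₀ - P₀) ∧
    {g : G | ∃ P ∈ canonicalT P₀, P - ({g} : Set G) ∈ canonicalT P₀} ∩ U = {0} := by
  obtain ⟨p0, hp0⟩ := hne
  -- Part 1: return times lie in `closure (P₀ - P₀)`.
  have hsub : {g : G | ∃ P ∈ canonicalT P₀, P - ({g} : Set G) ∈ canonicalT P₀}
      ⊆ closure (P₀ - P₀) := by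
    rintro g ⟨P, ⟨⟨gs, hT1, hT2⟩, h0⟩, _, h0g⟩
    have hgP : g ∈ P := by
      obtain ⟨a, ha, b, hb, hab⟩ := h0g
      rw [Set.mem_singleton_iff] at hb
      rw [hb, sub_eq_zero] at hab
      rwa [hab] at ha
    obtain ⟨p, hp, hpt⟩ := hT2 0 h0
    obtain ⟨q, hq, hqt⟩ := hT2 g hgP
    have hmem : ∀ n, q n - p n ∈ P₀ - P₀ := by
      intro n
      obtain ⟨a, ha, b, hb, hab⟩ := hq n
      obtain ⟨c, hc, d, hd, hcd⟩ := hp n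
      rw [Set.mem_singleton_iff] at hb hd
      subst hb hd
      exact ⟨a, ha, c, hc, by rw [← hab, ← hcd]; beta_reduce; abel⟩
    have ht : Tendsto (fun n => q n - p n) atTop (𝓝 (g - 0)) := hqt.sub hpt
    rw [sub_zero] at ht
    exact mem_closure_of_tendsto ht (Eventually.of_forall hmem)
  refine ⟨hsub, ?_⟩
  -- `closure (P₀ - P₀) ∩ U ⊆ {0}`
  have hclU : closure (P₀ - P₀) ∩ U ⊆ ({0} : Set G) := by
    rintro x ⟨hxc, hxU⟩
    have hx0 : x ∈ closure ({0} : Set G) := by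
      have hx : x ∈ closure (U ∩ (P₀ - P₀)) := hUo.inter_closure ⟨hxU, hxc⟩
      rw [Set.inter_comm, hud] at hx
      exact hx
    have hpx : p0 + x ∈ P₀ := by
      have : p0 + x ∈ closure P₀ :=
        map_mem_closure (continuous_const.add continuous_id) hx0 (by simpa using hp0)
      rwa [hcl.closure_eq] at this
    have : x ∈ (P₀ - P₀) ∩ U := ⟨⟨p0 + x, hpx, p0, hp0, add_sub_cancel_left p0 x⟩, hxU⟩
    rwa [hud] at this
  -- membership of `0` in the set of return times.
  have h0mem : (0 : G) ∈ {g : G | ∃ P ∈ canonicalT P₀, P - ({g} : Set G) ∈ canonicalT P₀} := by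
    set P : Set G := P₀ - ({p0} : Set G) with hPdef
    have hPc : IsClosed P := by
      have : P = (Homeomorph.subRight p0) '' P₀ := by
        rw [hPdef, Set.sub_singleton]; rfl
      rw [this]
      exact (Homeomorph.subRight p0).isClosed_image.mpr hcl
    have h0P : (0 : G) ∈ P := ⟨p0, hp0, p0, rfl, sub_self p0⟩
    have hhull : InHull P₀ P := by
      refine ⟨fun _ => p0, ?_, ?_⟩
      · intro φ hφ p x hp hx
        exact hPc.mem_of_tendsto hx (Eventually.of_forall hp)
      · intro x hx
        exact ⟨fun _ => x, fun n => hx, tendsto_const_nhds⟩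
    have hP0 : P - ({0} : Set G) = P := by
      simp [Set.sub_singleton]
    exact ⟨P, ⟨hhull, h0P⟩, by rw [hP0]; exact ⟨hhull, h0P⟩⟩
  refine Set.Subset.antisymm ?_ ?_
  · intro x ⟨hx1, hx2⟩
    exact hclU ⟨hsub hx1, hx2⟩
  · intro x hx
    rw [Set.mem_singleton_iff] at hx
    subst hx
    exact ⟨h0mem, hU0⟩
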